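/- arXiv:2501.19029 — 2 statements merged into one kernel-verified Lean document; each statement's English description precedes it below -/
import Mathlib

section
/- Let n ≥ 5, let M be a matching of the hypercube Q_n, and let u, v be vertices of Q_n of opposite parity. If at least one of the C-conditions holds for M, u, v, then there is no Hamilton path of Q_n between u and v extending M. -/
open SimpleGraph

/-- The hypercube graph `Q_n` on binary strings of length `n`:
two strings are adjacent iff they differ in exactly one coordinate. -/
def Qc (n : ℕ) : SimpleGraph (Fin n → Bool) where
  Adj u v := (Finset.univ.filter fun i => u i ≠ v i).card = 1
  symm := by
    constructor
    intro u v h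
    have hset : (Finset.univ.filter fun i => v i ≠ u i)
        = (Finset.univ.filter fun i => u i ≠ v i) :=
      Finset.filter_congr (fun i _ => by simp [ne_comm])
    rw [hset]; exact h
  loopless := by
    constructor
    intro u h
    simp at h

/-- The parity (weight mod 2) of a vertex of the hypercube. -/
def wt {n : ℕ} (u : Fin n → Bool) : ZMod 2 :=
  ((Finset.univ.filter fun i => u i = true).card : ZMod 2)

/-- The neighbor of `u` obtained by flipping coordinate `i`. -/
def flipCoord {n : ℕ} (u : Fin n → Bool) (i : Fin n) : Fin n → Bool :=
  Function.update u i (!u i)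

/-- `M` is a matching of the graph `G`: a set of pairwise non-incident edges of `G`. -/
def IsMatchingOn {V : Type*} (G : SimpleGraph V) (M : Set (Sym2 V)) : Prop :=
  M ⊆ G.edgeSet ∧ ∀ e ∈ M, ∀ f ∈ M, e ≠ f → ∀ v : V, v ∈ e → v ∉ f

/-- A vertex is covered by a set of edges if it is an endpoint of one of them. -/
def coveredBy {V : Type*} (M : Set (Sym2 V)) (v : V) : Prop :=
  ∃ e ∈ M, v ∈ e

/-- There is a Hamilton path of `G` between `u` and `v` whose edge set contains `M`. -/
def ExtendsHamPath {V : Type*} [DecidableEq V] (G : SimpleGraph V) (M : Set (Sym2 V)) (u v : V) : Prop :=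
  ∃ p : G.Walk u v, p.IsHamiltonian ∧ ∀ e ∈ M, e ∈ p.edges

/-- There is a Hamilton cycle of `G` whose edge set contains `M`. -/
def ExtendsHamCycle {V : Type*} [DecidableEq V] (G : SimpleGraph V) (M : Set (Sym2 V)) : Prop :=
  ∃ (a : V) (c : G.Walk a a), c.IsHamiltonianCycle ∧ ∀ e ∈ M, e ∈ c.edges

/-- The set of directions (coordinates where the endpoints differ) of an edge. -/
def edgeDirs {n : ℕ} (e : Sym2 (Fin n → Bool)) : Finset (Fin n) :=
  Sym2.lift ⟨fun u v => Finset.univ.filter fun i => u i ≠ v i, fun u v =>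
    Finset.filter_congr (fun i _ => by simp [ne_comm])⟩ e

/-- The edges of `M` lie in at most `d` distinct directions. -/
def SpansAtMost {n : ℕ} (M : Set (Sym2 (Fin n → Bool))) (d : ℕ) : Prop :=
  ∃ D : Finset (Fin n), D.card ≤ d ∧ ∀ e ∈ M, edgeDirs e ⊆ D

/-- The half-layer in direction `i` of parity `p`: all edges of `Q_n` in direction `i`
whose base (the endpoint with `i`-th coordinate `false`) has parity `p`. -/
def halfLayer (n : ℕ) (i : Fin n) (p : ZMod 2) : Set (Sym2 (Fin n → Bool)) :=
  {e | ∃ u : Fin n → Bool, u i = false ∧ wt u = p ∧ e = s(u, flipCoord u i)}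

/-- Condition C1: `M` contains a half-layer covering both `u` and `v`. -/
def CondC1 {n : ℕ} (M : Set (Sym2 (Fin n → Bool))) (u v : Fin n → Bool) : Prop :=
  ∃ (i : Fin n) (p : ZMod 2), halfLayer n i p ⊆ M ∧
    coveredBy (halfLayer n i p) u ∧ coveredBy (halfLayer n i p) v

/-- Condition C2: `v = u^i`, `M` contains a `u`-avoiding almost half-layer in direction `i`,
and there is `j ≠ i` with `u u^j ∈ M` and `v v^j ∈ M`. -/
def CondC2 {n : ℕ} (M : Set (Sym2 (Fin n → Bool))) (u v : Fin n → Bool) : Prop :=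
  ∃ i : Fin n, v = flipCoord u i ∧
    (∃ (p : ZMod 2) (e₀ : Sym2 (Fin n → Bool)), e₀ ∈ halfLayer n i p ∧ u ∈ e₀ ∧
      halfLayer n i p \ {e₀} ⊆ M) ∧
    ∃ j : Fin n, j ≠ i ∧ s(u, flipCoord u j) ∈ M ∧ s(v, flipCoord v j) ∈ M

/-- Condition C3: `uv ∈ M`. -/
def CondC3 {n : ℕ} (M : Set (Sym2 (Fin n → Bool))) (u v : Fin n → Bool) : Prop :=
  s(u, v) ∈ M

/-- None of the C-conditions holds for `M`, `u`, `v`. -/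
def NoneC {n : ℕ} (M : Set (Sym2 (Fin n → Bool))) (u v : Fin n → Bool) : Prop :=
  ¬ CondC1 M u v ∧ ¬ CondC2 M u v ∧ ¬ CondC3 M u v

/-- Conjecture A for dimension `d`: for every matching `M` of `Q_d` and vertices `u`, `v`
of opposite parity with `u` not covered by `M`, there is a Hamilton path between `u` and `v`
extending `M`. -/
def ConjA (d : ℕ) : Prop :=
  ∀ M : Set (Sym2 (Fin d → Bool)), IsMatchingOn (Qc d) M →
    ∀ u v : Fin d → Bool, wt u ≠ wt v → ¬ coveredBy M u →
      ExtendsHamPath (Qc d) M u v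

/-- Conjecture B for dimension `d`: for every matching `M` of `Q_d` and vertices `u`, `v`
of opposite parity, a Hamilton path between `u` and `v` extending `M` exists iff none of
the C-conditions holds. -/
def ConjB (d : ℕ) : Prop :=
  ∀ M : Set (Sym2 (Fin d → Bool)), IsMatchingOn (Qc d) M →
    ∀ u v : Fin d → Bool, wt u ≠ wt v →
      (ExtendsHamPath (Qc d) M u v ↔ NoneC M u v)

/-- There exist at least two distinct Hamilton paths of `G` between `u` and `v`
extending `M`. -/
def TwoHamPaths {V : Type*} [DecidableEq V] (G : SimpleGraph V) (M : Set (Sym2 V)) (u v : V) : Prop :=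
  ∃ p₁ p₂ : G.Walk u v, p₁.IsHamiltonian ∧ (∀ e ∈ M, e ∈ p₁.edges) ∧
    p₂.IsHamiltonian ∧ (∀ e ∈ M, e ∈ p₂.edges) ∧ p₁ ≠ p₂

/-- Conjecture C for dimension `d`: none of the C-conditions holds iff there exist two
distinct Hamilton paths between `u` and `v` extending `M`. -/
def ConjC (d : ℕ) : Prop :=
  ∀ M : Set (Sym2 (Fin d → Bool)), IsMatchingOn (Qc d) M →
    ∀ u v : Fin d → Bool, wt u ≠ wt v →
      (NoneC M u v ↔ TwoHamPaths (Qc d) M u v)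

/-- The copy of a set of edges of `Q_d` inside the `i`-th canonical copy of `Q_d`
in `P_m □ Q_d`. -/
def liftEdges {m d : ℕ} (i : Fin m) (M : Set (Sym2 (Fin d → Bool))) :
    Set (Sym2 (Fin m × (Fin d → Bool))) :=
  (Sym2.map fun x => (i, x)) '' M

/-- The global parity of a vertex of `P_m □ Q_d`. -/
def gwt {m d : ℕ} (v : Fin m × (Fin d → Bool)) : ZMod 2 :=
  (v.1.val : ZMod 2) + wt v.2

/-- The sequence of half-layers of `P_m □ Q_d` in direction `k` of global parity `p`:
all edges of the canonical copies lying in direction `k` whose base has global parity `p`. -/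
def seqHalfLayer (m d : ℕ) (k : Fin d) (p : ZMod 2) :
    Set (Sym2 (Fin m × (Fin d → Bool))) :=
  {e | ∃ (i : Fin m) (x : Fin d → Bool), x k = false ∧ gwt (i, x) = p ∧
    e = s((i, x), (i, flipCoord x k))}

/-- `M` is a maximal matching of `G`. -/
def IsMaximalMatchingOn {V : Type*} (G : SimpleGraph V) (M : Set (Sym2 V)) : Prop :=
  IsMatchingOn G M ∧ ∀ e : Sym2 V, IsMatchingOn G (insert e M) → e ∈ M

/-- The set `(M \ {uu^M, vv^M}) ∪ {u^M v^M}`, where the removed edges are those of `M`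
incident to `u` or `v`, and the edge `u^M v^M` is present exactly when both `u` and `v`
are covered by `M`. -/
def reducedM {n : ℕ} (M : Set (Sym2 (Fin n → Bool))) (u v : Fin n → Bool) :
    Set (Sym2 (Fin n → Bool)) :=
  {e | e ∈ M ∧ u ∉ e ∧ v ∉ e} ∪
    {f | ∃ a b : Fin n → Bool, s(u, a) ∈ M ∧ s(v, b) ∈ M ∧ f = s(a, b)}

/-- The complete bipartite graph `B(Q_n)` on the vertices of `Q_n`: two vertices are
adjacent iff they have opposite parity. -/
def Bgraph (n : ℕ) : SimpleGraph (Fin n → Bool) where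
  Adj u v := wt u ≠ wt v
  symm := ⟨fun _ _ h => h.symm⟩
  loopless := ⟨fun _ h => h rfl⟩

section helpers
variable {n : ℕ}

lemma flip_same (u : Fin n → Bool) (i : Fin n) : flipCoord u i i = !u i := by
  simp [flipCoord]

lemma flip_ne (u : Fin n → Bool) {i j : Fin n} (h : j ≠ i) : flipCoord u i j = u j := by
  simp [flipCoord, Function.update_of_ne h]

lemma flipC_flip (u : Fin n → Bool) (i : Fin n) : flipCoord (flipCoord u i) i = u := by
  funext k
  by_cases h : k = i
  · subst h; simp [flip_same]
  · rw [flip_ne _ h, flip_ne _ h]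

lemma flip_ne_self (u : Fin n → Bool) (i : Fin n) : flipCoord u i ≠ u := by
  intro h
  have := congrFun h i
  rw [flip_same] at this
  simp at this

lemma flip_comm (u : Fin n → Bool) {i j : Fin n} (h : i ≠ j) :
    flipCoord (flipCoord u i) j = flipCoord (flipCoord u j) i := by
  funext k
  by_cases hk : k = i
  · subst hk
    rw [flip_ne _ h, flip_same, flip_same, flip_ne _ h]
  · by_cases hk2 : k = j
    · subst hk2
      rw [flip_same, flip_ne _ h.symm, flip_ne _ h.symm, flip_same]
    · rw [flip_ne _ hk2, flip_ne _ hk, flip_ne _ hk, flip_ne _ hk2]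

lemma wt_flip (u : Fin n → Bool) (i : Fin n) : wt (flipCoord u i) = wt u + 1 := by
  classical
  have h11 : (1 : ZMod 2) + 1 = 0 := by decide
  by_cases h : u i = true
  · have hfs : Finset.univ.filter (fun k => flipCoord u i k = true)
        = (Finset.univ.filter (fun k => u k = true)).erase i := by
      ext k
      by_cases hk : k = i
      · subst hk; simp [flip_same, h]
      · simp [flip_ne _ hk, hk]
    have hi : i ∈ Finset.univ.filter (fun k => u k = true) := by simp [h]
    have hpos : 1 ≤ (Finset.univ.filter (fun k => u k = true)).card :=
      Finset.card_pos.mpr ⟨i, hi⟩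
    have hcard : ((Finset.univ.filter (fun k => u k = true)).erase i).card + 1
        = (Finset.univ.filter (fun k => u k = true)).card := by
      rw [Finset.card_erase_of_mem hi]; omega
    show ((Finset.univ.filter (fun k => flipCoord u i k = true)).card : ZMod 2)
        = ((Finset.univ.filter (fun k => u k = true)).card : ZMod 2) + 1
    rw [hfs, ← hcard]
    push_cast
    linear_combination -h11
  · have hfs : Finset.univ.filter (fun k => flipCoord u i k = true)
        = insert i (Finset.univ.filter (fun k => u k = true)) := by
      ext k
      by_cases hk : k = i
      · subst hk; simp [flip_same, h]
      · simp [flip_ne _ hk, hk]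
    have hi : i ∉ Finset.univ.filter (fun k => u k = true) := by simp [h]
    show ((Finset.univ.filter (fun k => flipCoord u i k = true)).card : ZMod 2)
        = ((Finset.univ.filter (fun k => u k = true)).card : ZMod 2) + 1
    rw [hfs, Finset.card_insert_of_notMem hi]
    push_cast
    ring

lemma qc_adj {x y : Fin n → Bool} : (Qc n).Adj x y ↔ ∃ j, y = flipCoord x j := by
  constructor
  · intro h
    have h1 : (Finset.univ.filter fun i => x i ≠ y i).card = 1 := h
    obtain ⟨j, hj⟩ := Finset.card_eq_one.mp h1
    refine ⟨j, funext fun k => ?_⟩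
    by_cases hk : k = j
    · subst hk
      have : k ∈ Finset.univ.filter fun i => x i ≠ y i := by rw [hj]; simp
      simp only [Finset.mem_filter] at this
      rw [flip_same]
      cases hx : x k <;> cases hy : y k <;> simp_all
    · have : k ∉ Finset.univ.filter fun i => x i ≠ y i := by rw [hj]; simp [hk]
      simp only [Finset.mem_filter, Finset.mem_univ, true_and] at this
      rw [flip_ne _ hk]
      push_neg at this
      exact this.symm
  · rintro ⟨j, rfl⟩
    show (Finset.univ.filter fun i => x i ≠ flipCoord x j i).card = 1
    have : (Finset.univ.filter fun i => x i ≠ flipCoord x j i) = {j} := by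
      ext k
      by_cases hk : k = j
      · subst hk; simp [flip_same]
      · simp [flip_ne _ hk, hk]
    rw [this, Finset.card_singleton]

lemma edge_decomp {e : Sym2 (Fin n → Bool)} (he : e ∈ (Qc n).edgeSet) {w : Fin n → Bool}
    (hw : w ∈ e) : ∃ z, e = s(w, z) ∧ (Qc n).Adj w z := by
  induction e with
  | h a b =>
    rw [Sym2.mem_iff] at hw
    rw [SimpleGraph.mem_edgeSet] at he
    rcases hw with rfl | rfl
    · exact ⟨b, rfl, he⟩
    · exact ⟨a, Sym2.eq_swap, he.symm⟩

end helpers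

section listlemmas
variable {α : Type*}

lemma countP_one_char {l : List α} {q : α → Bool} (h : l.countP q = 1) :
    ∃ e, e ∈ l ∧ q e ∧ ∀ f ∈ l, q f → f = e := by
  rw [List.countP_eq_length_filter] at h
  obtain ⟨a, ha⟩ := List.length_eq_one_iff.mp h
  refine ⟨a, ?_, ?_, ?_⟩
  · have : a ∈ l.filter q := by rw [ha]; simp
    exact (List.mem_filter.mp this).1
  · have : a ∈ l.filter q := by rw [ha]; simp
    exact (List.mem_filter.mp this).2
  · intro f hf hqf
    have : f ∈ l.filter q := List.mem_filter.mpr ⟨hf, hqf⟩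
    rw [ha] at this
    simpa using this

lemma countP_two_char {l : List α} (hnd : l.Nodup) {q : α → Bool} (h : l.countP q = 2) :
    ∃ e₁ e₂, e₁ ≠ e₂ ∧ (e₁ ∈ l ∧ q e₁) ∧ (e₂ ∈ l ∧ q e₂) ∧
      ∀ f ∈ l, q f → f = e₁ ∨ f = e₂ := by
  rw [List.countP_eq_length_filter] at h
  obtain ⟨a, b, hab⟩ := List.length_eq_two.mp h
  have hndf : (l.filter q).Nodup := hnd.filter q
  rw [hab] at hndf
  have hne : a ≠ b := by simpa using hndf
  have hma : a ∈ l.filter q := by rw [hab]; simp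
  have hmb : b ∈ l.filter q := by rw [hab]; simp
  refine ⟨a, b, hne, ⟨(List.mem_filter.mp hma).1, (List.mem_filter.mp hma).2⟩,
    ⟨(List.mem_filter.mp hmb).1, (List.mem_filter.mp hmb).2⟩, ?_⟩
  intro f hf hqf
  have : f ∈ l.filter q := List.mem_filter.mpr ⟨hf, hqf⟩
  rw [hab] at this
  simpa using this

lemma three_pigeon {x y z a b : α} (hxy : x ≠ y) (hxz : x ≠ z) (hyz : y ≠ z)
    (hx : x = a ∨ x = b) (hy : y = a ∨ y = b) (hz : z = a ∨ z = b) : False := by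
  rcases hx with rfl | rfl <;> rcases hy with rfl | rfl <;> rcases hz with rfl | rfl <;>
    simp_all

end listlemmas

section walkdeg
variable {V : Type*} [DecidableEq V] {G : SimpleGraph V}

lemma mem_support_of_mem_edges' {a b : V} {p : G.Walk a b} {e : Sym2 V} {w : V}
    (he : e ∈ p.edges) (hw : w ∈ e) : w ∈ p.support := by
  induction e with
  | h x y =>
    rw [Sym2.mem_iff] at hw
    rcases hw with rfl | rfl
    · exact p.fst_mem_support_of_mem_edges he
    · exact p.snd_mem_support_of_mem_edges he

lemma walk_degree {a b : V} (p : G.Walk a b) (hp : p.IsPath) (w : V) (hw : w ∈ p.support) :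
    p.edges.countP (fun e => decide (w ∈ e))
      = (if w = a then 0 else 1) + (if w = b then 0 else 1) := by
  induction p with
  | nil =>
    simp only [SimpleGraph.Walk.support_nil, List.mem_singleton] at hw
    subst hw
    simp
  | @cons x y z hadj q ih =>
    rw [SimpleGraph.Walk.cons_isPath_iff] at hp
    obtain ⟨hq, hxs⟩ := hp
    rw [SimpleGraph.Walk.edges_cons, List.countP_cons]
    rw [SimpleGraph.Walk.support_cons, List.mem_cons] at hw
    by_cases hwx : w = x
    · subst hwx
      have h0 : q.edges.countP (fun e => decide (w ∈ e)) = 0 := by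
        rw [List.countP_eq_zero]
        intro e he
        simp only [decide_eq_true_eq]
        intro hmem
        exact hxs (mem_support_of_mem_edges' he hmem)
      have hwz : w ≠ z := fun hh => hxs (hh ▸ q.end_mem_support)
      simp [h0, hwz, Sym2.mem_iff]
    · have hwq : w ∈ q.support := hw.resolve_left hwx
      rw [ih hq hwq]
      by_cases hwy : w = y
      · subst hwy
        simp only [Sym2.mem_iff, hwx]
        simp [Nat.add_comm]
      · have : ¬ (w ∈ s(x, y)) := by
          rw [Sym2.mem_iff]
          push_neg
          exact ⟨hwx, hwy⟩
        simp [this, hwx, hwy]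
end walkdeg


set_option linter.unusedSectionVars false

section ham
variable {V : Type*} [DecidableEq V] {G : SimpleGraph V} {u v : V}

lemma ham_mem_support (p : G.Walk u v) (hp : p.IsHamiltonian) (w : V) : w ∈ p.support := by
  by_contra hh
  have h1 := hp w
  rw [List.count_eq_zero_of_not_mem hh] at h1
  exact one_ne_zero h1.symm

lemma ham_deg (p : G.Walk u v) (hp : p.IsHamiltonian) (w : V) :
    p.edges.countP (fun e => decide (w ∈ e))
      = (if w = u then 0 else 1) + (if w = v then 0 else 1) :=
  walk_degree p hp.isPath w (ham_mem_support p hp w)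

lemma ham_reverse (p : G.Walk u v) (hp : p.IsHamiltonian) : p.reverse.IsHamiltonian := by
  intro w
  rw [SimpleGraph.Walk.support_reverse, List.count_reverse]
  exact hp w

end ham

section hlmem
variable {n : ℕ}

lemma zmod_two_add (a : ZMod 2) : a + 1 + 1 = a := by revert a; decide

lemma zmod_two_ne (a : ZMod 2) : a ≠ a + 1 := by revert a; decide

lemma hl_base {i : Fin n} {pz : ZMod 2} {a : Fin n → Bool} (ha : a i = false) (hw : wt a = pz) :
    s(a, flipCoord a i) ∈ halfLayer n i pz := ⟨a, ha, hw, rfl⟩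

lemma hl_top {i : Fin n} {pz : ZMod 2} {b : Fin n → Bool} (hb : b i = true)
    (hw : wt b = pz + 1) : s(flipCoord b i, b) ∈ halfLayer n i pz := by
  refine ⟨flipCoord b i, ?_, ?_, ?_⟩
  · rw [flip_same, hb]; rfl
  · rw [wt_flip, hw, zmod_two_add]
  · rw [flipC_flip]

end hlmem

section cores
variable {n : ℕ}

lemma exists_B_edge (i : Fin n) (pz : ZMod 2) {u v : Fin n → Bool}
    (p : (Qc n).Walk u v) (hp : p.IsHamiltonian)
    {d : Fin n → Bool} (hdi : d i = true) (hdw : wt d = pz) (hdu : d ≠ u) (hdv : d ≠ v) :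
    ∃ b, (b i = true ∧ wt b = pz + 1) ∧ s(b, d) ∈ p.edges := by
  have hpath := hp.isPath
  have hnd := hpath.edges_nodup
  have hdeg := ham_deg p hp d
  rw [if_neg hdu, if_neg hdv] at hdeg
  norm_num at hdeg
  obtain ⟨e₁, e₂, hne, ⟨he₁, hd₁⟩, ⟨he₂, hd₂⟩, -⟩ := countP_two_char hnd hdeg
  simp only [decide_eq_true_eq] at hd₁ hd₂
  obtain ⟨z₁, hez₁, hadj₁⟩ := edge_decomp (p.edges_subset_edgeSet he₁) hd₁
  obtain ⟨z₂, hez₂, hadj₂⟩ := edge_decomp (p.edges_subset_edgeSet he₂) hd₂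
  obtain ⟨j₁, hj₁⟩ := qc_adj.mp hadj₁
  obtain ⟨j₂, hj₂⟩ := qc_adj.mp hadj₂
  have hz12 : z₁ ≠ z₂ := by
    intro hzz
    apply hne
    rw [hez₁, hez₂, hzz]
  have mk : ∀ (z : Fin n → Bool), z i = true → (∃ jj, z = flipCoord d jj) →
      s(d, z) ∈ p.edges → ∃ b, (b i = true ∧ wt b = pz + 1) ∧ s(b, d) ∈ p.edges := by
    rintro z hzi ⟨jj, rfl⟩ hze
    refine ⟨flipCoord d jj, ⟨hzi, ?_⟩, ?_⟩
    · rw [wt_flip, hdw]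
    · rw [Sym2.eq_swap]
      exact hze
  have hcase : z₁ i = true ∨ z₂ i = true := by
    by_contra hcon
    push_neg at hcon
    obtain ⟨h1, h2⟩ := hcon
    simp only [Bool.not_eq_true] at h1 h2
    have e1 : z₁ = flipCoord d i := by
      rcases eq_or_ne j₁ i with rfl | hji
      · exact hj₁
      · exfalso
        rw [hj₁, flip_ne d (Ne.symm hji), hdi] at h1
        simp at h1
    have e2 : z₂ = flipCoord d i := by
      rcases eq_or_ne j₂ i with rfl | hji
      · exact hj₂
      · exfalso
        rw [hj₂, flip_ne d (Ne.symm hji), hdi] at h2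
        simp at h2
    exact hz12 (e1.trans e2.symm)
  rcases hcase with h | h
  · exact mk z₁ h ⟨j₁, hj₁⟩ (hez₁ ▸ he₁)
  · exact mk z₂ h ⟨j₂, hj₂⟩ (hez₂ ▸ he₂)

lemma core1 (hn : 5 ≤ n) (i : Fin n) (pz : ZMod 2) {u v : Fin n → Bool}
    (p : (Qc n).Walk u v) (hp : p.IsHamiltonian)
    (hH : ∀ e ∈ halfLayer n i pz, e ∈ p.edges)
    (hui : u i = false) (huw : wt u = pz) (hvi : v i = true) (hvw : wt v = pz + 1) :
    False := by
  classical
  have hpath := hp.isPath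
  have hnd := hpath.edges_nodup
  have huv : u ≠ v := by
    intro h
    rw [h, hvi] at hui
    simp at hui
  set B := Finset.univ.filter (fun x : Fin n → Bool => x i = true ∧ wt x = pz + 1) with hB
  set D := Finset.univ.filter (fun x : Fin n → Bool => x i = true ∧ wt x = pz) with hD
  set S := (B ×ˢ D).filter (fun q => s(q.1, q.2) ∈ p.edges) with hS
  have hvB : v ∈ B := by
    rw [hB, Finset.mem_filter]
    exact ⟨Finset.mem_univ _, hvi, hvw⟩
  -- |B| = |D|
  obtain ⟨j₀, hj₀⟩ : ∃ j : Fin n, j ≠ i := by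
    have h2 : (1 : ℕ) < n := by omega
    have : Nontrivial (Fin n) := Fin.nontrivial_iff_two_le.mpr (by omega)
    exact exists_ne i
  have hBD : B.card = D.card := by
    apply Finset.card_nbij' (i := fun x => flipCoord x j₀) (j := fun x => flipCoord x j₀)
    · intro x hx
      rw [hB, Finset.mem_coe, Finset.mem_filter] at hx
      rw [hD, Finset.mem_coe, Finset.mem_filter]
      refine ⟨Finset.mem_univ _, ?_, ?_⟩
      · beta_reduce; rw [flip_ne x (Ne.symm hj₀)]; exact hx.2.1
      · rw [wt_flip, hx.2.2, zmod_two_add]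
    · intro x hx
      rw [hD, Finset.mem_coe, Finset.mem_filter] at hx
      rw [hB, Finset.mem_coe, Finset.mem_filter]
      refine ⟨Finset.mem_univ _, ?_, ?_⟩
      · beta_reduce; rw [flip_ne x (Ne.symm hj₀)]; exact hx.2.1
      · rw [wt_flip, hx.2.2]
    · intro x _; exact flipC_flip x j₀
    · intro x _; exact flipC_flip x j₀
  -- lower bound
  have hex : ∀ d ∈ D, ∃ b, (b i = true ∧ wt b = pz + 1) ∧ s(b, d) ∈ p.edges := by
    intro d hd
    rw [hD, Finset.mem_filter] at hd
    have hdu : d ≠ u := by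
      intro h
      rw [h, hui] at hd
      simp at hd
    have hdv : d ≠ v := by
      intro h
      rw [h, hvw] at hd
      exact zmod_two_ne pz hd.2.2.symm
    exact exists_B_edge i pz p hp hd.2.1 hd.2.2 hdu hdv
  have hlow : D.card ≤ S.card := by
    set f : (Fin n → Bool) → (Fin n → Bool) × (Fin n → Bool) :=
      fun d => if h : ∃ b, (b i = true ∧ wt b = pz + 1) ∧ s(b, d) ∈ p.edges
        then (h.choose, d) else (d, d) with hf
    have hsnd : ∀ d, (f d).2 = d := by
      intro d
      rw [hf]
      by_cases h : ∃ b, (b i = true ∧ wt b = pz + 1) ∧ s(b, d) ∈ p.edges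
      · simp [dif_pos h]
      · simp [dif_neg h]
    apply Finset.card_le_card_of_injOn f
    · intro d hd
      have h := hex d hd
      rw [hf]
      simp only [dif_pos h]
      obtain ⟨hb, he⟩ := h.choose_spec
      rw [hS, Finset.mem_coe, Finset.mem_filter, Finset.mem_product]
      refine ⟨⟨?_, hd⟩, he⟩
      rw [hB, Finset.mem_filter]
      exact ⟨Finset.mem_univ _, hb⟩
    · intro d1 _ d2 _ hfe
      have := congrArg Prod.snd hfe
      rwa [hsnd, hsnd] at this
  -- fiber bound
  have hfib : ∀ b ∈ B, (S.filter (fun q => q.1 = b)).card ≤ if b = v then 0 else 1 := by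
    intro b hb
    rw [hB, Finset.mem_filter] at hb
    obtain ⟨-, hbi, hbw⟩ := hb
    have hbu : b ≠ u := by
      intro h
      rw [h, hui] at hbi
      simp at hbi
    have hHb : s(flipCoord b i, b) ∈ p.edges := hH _ (hl_top hbi hbw)
    by_cases hbv : b = v
    · rw [if_pos hbv]
      subst hbv
      have hdeg := ham_deg p hp b
      rw [if_neg hbu, if_pos rfl] at hdeg
      norm_num at hdeg
      obtain ⟨e, he, hbe, hchar⟩ := countP_one_char hdeg
      have h1 := hchar _ hHb (by simp)
      apply Nat.le_zero.mpr
      rw [Finset.card_eq_zero, Finset.eq_empty_iff_forall_notMem]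
      intro q hq
      rw [Finset.mem_filter, hS, Finset.mem_filter, Finset.mem_product] at hq
      obtain ⟨⟨⟨hq1, hq2⟩, hq3⟩, hq4⟩ := hq
      rw [hD, Finset.mem_filter] at hq2
      rw [hq4] at hq3
      have h2 := hchar _ hq3 (by simp)
      rw [← h1] at h2
      rw [Sym2.eq_iff] at h2
      rcases h2 with ⟨hx, -⟩ | ⟨-, hy⟩
      · have hco := congrFun hx i
        rw [flip_same, hbi] at hco
        simp at hco
      · have hco := congrFun hy i
        rw [hq2.2.1, flip_same, hbi] at hco
        simp at hco
    · rw [if_neg hbv]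
      by_contra hcon
      push_neg at hcon
      obtain ⟨q1, hq1, q2, hq2, hqne⟩ := Finset.one_lt_card.mp hcon
      rw [Finset.mem_filter, hS, Finset.mem_filter, Finset.mem_product] at hq1 hq2
      obtain ⟨⟨⟨hq11, hq12⟩, hq13⟩, hq14⟩ := hq1
      obtain ⟨⟨⟨hq21, hq22⟩, hq23⟩, hq24⟩ := hq2
      rw [hD, Finset.mem_filter] at hq12 hq22
      rw [hq14] at hq13
      rw [hq24] at hq23
      have hdne : q1.2 ≠ q2.2 := by
        intro h
        apply hqne
        apply Prod.ext
        · rw [hq14, hq24]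
        · exact h
      have hdeg := ham_deg p hp b
      rw [if_neg hbu, if_neg hbv] at hdeg
      norm_num at hdeg
      obtain ⟨e₁, e₂, he12, ⟨hm1, -⟩, ⟨hm2, -⟩, hchar⟩ := countP_two_char hnd hdeg
      have hnebd : ∀ d : Fin n → Bool, d i = true → s(b, d) ≠ s(flipCoord b i, b) := by
        intro d hdi hh
        rw [Sym2.eq_iff] at hh
        rcases hh with ⟨hx, -⟩ | ⟨-, hy⟩
        · have := congrFun hx i
          rw [hbi, flip_same, hbi] at this
          simp at this
        · have hco := congrFun hy i
          rw [hdi, flip_same, hbi] at hco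
          simp at hco
      refine three_pigeon (x := s(b, q1.2)) (y := s(b, q2.2)) (z := s(flipCoord b i, b))
        (a := e₁) (b := e₂) ?_ ?_ ?_ ?_ ?_ ?_
      · intro hh
        exact hdne (Sym2.congr_right.mp hh)
      · exact hnebd q1.2 hq12.2.1
      · exact hnebd q2.2 hq22.2.1
      · exact hchar _ hq13 (by simp)
      · exact hchar _ hq23 (by simp)
      · exact hchar _ hHb (by simp)
  -- upper bound via fibers
  have hSsum : S.card = ∑ b ∈ B, (S.filter (fun q => q.1 = b)).card := by
    apply Finset.card_eq_sum_card_fiberwise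
    intro q hq
    rw [hS, Finset.mem_coe, Finset.mem_filter, Finset.mem_product] at hq
    exact hq.1.1
  have hup : S.card ≤ B.card - 1 := by
    rw [hSsum]
    calc ∑ b ∈ B, (S.filter (fun q => q.1 = b)).card
        ≤ ∑ b ∈ B, (if b = v then 0 else 1) := Finset.sum_le_sum hfib
      _ = B.card - 1 := by
          rw [← Finset.sum_erase (f := fun b => if b = v then (0 : ℕ) else 1) (a := v) B (by simp)]
          rw [Finset.sum_congr rfl (fun b hb => if_neg (Finset.ne_of_mem_erase hb))]
          rw [Finset.sum_const, smul_eq_mul, mul_one, Finset.card_erase_of_mem hvB]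
  have hBpos : 0 < B.card := Finset.card_pos.mpr ⟨v, hvB⟩
  omega

lemma forced4 (hn : 5 ≤ n) {u a b v : Fin n → Bool}
    (p : (Qc n).Walk u v) (hp : p.IsHamiltonian)
    (huv : u ≠ v) (hav : a ≠ v) (hbv : b ≠ v)
    (hu : ∀ f ∈ p.edges, u ∈ f → f = s(u, a))
    (ha : ∀ f ∈ p.edges, a ∈ f → f = s(u, a) ∨ f = s(a, b))
    (hb : ∀ f ∈ p.edges, b ∈ f → f = s(a, b) ∨ f = s(b, v))
    (hv : ∀ f ∈ p.edges, v ∈ f → f = s(b, v)) : False := by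
  have hcard : Fintype.card (Fin n → Bool) = 2 ^ n := by
    rw [Fintype.card_fun]
    simp
  have hbig : 5 ≤ 2 ^ n := by
    have h1 : 2 ^ 5 ≤ 2 ^ n := Nat.pow_le_pow_right (by norm_num) hn
    omega
  cases p with
  | nil => exact huv rfl
  | @cons _ x _ h1 q =>
    have hx : a = x := by
      have h1e : s(u, x) ∈ (SimpleGraph.Walk.cons h1 q).edges := by
        simp [SimpleGraph.Walk.edges_cons]
      exact (Sym2.congr_right.mp (hu _ h1e (by simp))).symm
    subst hx
    have hsn := hp.isPath.support_nodup
    rw [SimpleGraph.Walk.support_cons] at hsn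
    obtain ⟨husup, hsn1⟩ := List.nodup_cons.mp hsn
    cases q with
    | nil => exact hav rfl
    | @cons _ y _ h2 q2 =>
      rw [SimpleGraph.Walk.support_cons] at husup hsn1
      obtain ⟨hasup, hsn2⟩ := List.nodup_cons.mp hsn1
      have hy : b = y := by
        have h2e : s(a, y) ∈ (SimpleGraph.Walk.cons h1 (SimpleGraph.Walk.cons h2 q2)).edges := by
          simp [SimpleGraph.Walk.edges_cons]
        rcases ha _ h2e (by simp) with hh | hh
        · exfalso
          rw [Sym2.eq_iff] at hh
          have hyu : y = u := by
            rcases hh with ⟨h3, h4⟩ | ⟨-, h4⟩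
            · rw [h4, h3]
            · exact h4
          apply husup
          rw [← hyu]
          exact List.mem_cons_of_mem _ q2.start_mem_support
        · exact (Sym2.congr_right.mp hh).symm
      subst hy
      cases q2 with
      | nil => exact hbv rfl
      | @cons _ z _ h3 q3 =>
        rw [SimpleGraph.Walk.support_cons] at hasup hsn2
        obtain ⟨hbsup, hsn3⟩ := List.nodup_cons.mp hsn2
        have hab : a ≠ b := fun hh => hasup (by rw [hh]; exact List.mem_cons_self)
        have hanb : a ∉ q3.support := fun hh => hasup (List.mem_cons_of_mem _ hh)
        have hz : v = z := by
          have h3e : s(b, z) ∈ (SimpleGraph.Walk.cons h1 (SimpleGraph.Walk.cons h2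
              (SimpleGraph.Walk.cons h3 q3))).edges := by
            simp [SimpleGraph.Walk.edges_cons]
          rcases hb _ h3e (by simp) with hh | hh
          · exfalso
            rw [Sym2.eq_iff] at hh
            rcases hh with ⟨h4, -⟩ | ⟨-, h4⟩
            · exact hab h4.symm
            · exact hanb (h4 ▸ q3.start_mem_support)
          · exact (Sym2.congr_right.mp hh).symm
        subst hz
        cases q3 with
        | nil =>
          have hlen := hp.length_eq
          simp only [SimpleGraph.Walk.length_cons, SimpleGraph.Walk.length_nil, hcard] at hlen
          omega
        | @cons _ w3 _ h4 q4 =>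
          have h4e : s(v, w3) ∈ (SimpleGraph.Walk.cons h1 (SimpleGraph.Walk.cons h2
              (SimpleGraph.Walk.cons h3 (SimpleGraph.Walk.cons h4 q4)))).edges := by
            simp [SimpleGraph.Walk.edges_cons]
          have hh := hv _ h4e (by simp)
          rw [Sym2.eq_iff] at hh
          rcases hh with ⟨h5, -⟩ | ⟨-, h5⟩
          · exact hbv h5.symm
          · apply hbsup
            rw [SimpleGraph.Walk.support_cons]
            rw [← h5]
            exact List.mem_cons_of_mem _ q4.start_mem_support

lemma forced2 (hn : 5 ≤ n) {u v : Fin n → Bool}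
    (p : (Qc n).Walk u v) (hp : p.IsHamiltonian) (huv : u ≠ v)
    (hu : ∀ f ∈ p.edges, u ∈ f → f = s(u, v))
    (hv : ∀ f ∈ p.edges, v ∈ f → f = s(u, v)) : False := by
  have hcard : Fintype.card (Fin n → Bool) = 2 ^ n := by
    rw [Fintype.card_fun]
    simp
  have hbig : 5 ≤ 2 ^ n := by
    have h1 : 2 ^ 5 ≤ 2 ^ n := Nat.pow_le_pow_right (by norm_num) hn
    omega
  cases p with
  | nil => exact huv rfl
  | @cons _ x _ h1 q =>
    have hx : v = x := by
      have h1e : s(u, x) ∈ (SimpleGraph.Walk.cons h1 q).edges := by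
        simp [SimpleGraph.Walk.edges_cons]
      exact (Sym2.congr_right.mp (hu _ h1e (by simp))).symm
    subst hx
    have hsn := hp.isPath.support_nodup
    rw [SimpleGraph.Walk.support_cons] at hsn
    obtain ⟨husup, -⟩ := List.nodup_cons.mp hsn
    cases q with
    | nil =>
      have hlen := hp.length_eq
      simp only [SimpleGraph.Walk.length_cons, SimpleGraph.Walk.length_nil, hcard] at hlen
      omega
    | @cons _ y _ h2 q2 =>
      have h2e : s(v, y) ∈ (SimpleGraph.Walk.cons h1 (SimpleGraph.Walk.cons h2 q2)).edges := by
        simp [SimpleGraph.Walk.edges_cons]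
      have hh := hv _ h2e (by simp)
      rw [Sym2.eq_iff] at hh
      have hyu : y = u := by
        rcases hh with ⟨h3, h4⟩ | ⟨-, h4⟩
        · exact absurd h3.symm huv
        · exact h4
      apply husup
      rw [← hyu]
      exact List.mem_cons_of_mem _ q2.start_mem_support

lemma core2 (hn : 5 ≤ n) (i j : Fin n) (pz : ZMod 2) (hji : j ≠ i) {u v : Fin n → Bool}
    (p : (Qc n).Walk u v) (hp : p.IsHamiltonian)
    (hui : u i = false) (huw : wt u = pz) (hvu : v = flipCoord u i)
    (hH : ∀ e ∈ halfLayer n i pz, e ≠ s(u, v) → e ∈ p.edges)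
    (hj1 : s(u, flipCoord u j) ∈ p.edges) (hj2 : s(v, flipCoord v j) ∈ p.edges) :
    False := by
  classical
  have hpath := hp.isPath
  have hnd := hpath.edges_nodup
  have hvi : v i = true := by rw [hvu, flip_same, hui]; rfl
  have hvw : wt v = pz + 1 := by rw [hvu, wt_flip, huw]
  have huv : u ≠ v := by
    intro h
    rw [h, hvi] at hui
    simp at hui
  set uj := flipCoord u j with huj
  set vj := flipCoord v j with hvj
  have huji : uj i = false := by rw [huj, flip_ne u (Ne.symm hji)]; exact hui
  have hvji : vj i = true := by rw [hvj, flip_ne v (Ne.symm hji)]; exact hvi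
  have hujw : wt uj = pz + 1 := by rw [huj, wt_flip, huw]
  have hvjw : wt vj = pz := by rw [hvj, wt_flip, hvw, zmod_two_add]
  have hbne : ∀ x y : Fin n → Bool, x i = false → y i = true → x ≠ y := by
    intro x y hx hy h
    rw [h, hy] at hx
    simp at hx
  have huju : uj ≠ u := by rw [huj]; exact flip_ne_self u j
  have hujv : uj ≠ v := hbne uj v huji hvi
  have hvjv : vj ≠ v := by rw [hvj]; exact flip_ne_self v j
  have hvju : vj ≠ u := (hbne u vj hui hvji).symm
  have huvj : u ≠ vj := hbne u vj hui hvji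
  have hujvj : uj ≠ vj := hbne uj vj huji hvji
  have key_flip : flipCoord vj i = uj := by
    rw [hvj, huj, flip_comm v hji, hvu, flipC_flip]
  -- unique edge at u
  have hdegu := ham_deg p hp u
  rw [if_pos rfl, if_neg huv] at hdegu
  norm_num at hdegu
  obtain ⟨eu, heu, hueu, hcharu0⟩ := countP_one_char hdegu
  have heuj : s(u, uj) = eu := hcharu0 _ hj1 (by simp)
  have hchar_u : ∀ f ∈ p.edges, u ∈ f → f = s(u, uj) := by
    intro f hf huf
    rw [heuj]
    exact hcharu0 _ hf (by simp [huf])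
  -- unique edge at v
  have hdegv := ham_deg p hp v
  rw [if_neg (Ne.symm huv), if_pos rfl] at hdegv
  norm_num at hdegv
  obtain ⟨ev, hev, hvev, hcharv0⟩ := countP_one_char hdegv
  have hevj : s(v, vj) = ev := hcharv0 _ hj2 (by simp)
  have hchar_v : ∀ f ∈ p.edges, v ∈ f → f = s(v, vj) := by
    intro f hf hvf
    rw [hevj]
    exact hcharv0 _ hf (by simp [hvf])
  -- H-edges of B-vertices other than v are in p
  have hHb : ∀ b0 : Fin n → Bool, b0 i = true → wt b0 = pz + 1 → b0 ≠ v →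
      s(flipCoord b0 i, b0) ∈ p.edges := by
    intro b0 hb0i hb0w hb0v
    apply hH _ (hl_top hb0i hb0w)
    intro hh
    rw [Sym2.eq_iff] at hh
    rcases hh with ⟨-, h4⟩ | ⟨-, h4⟩
    · exact hb0v h4
    · rw [h4, hui] at hb0i
      simp at hb0i
  set B := Finset.univ.filter (fun x : Fin n → Bool => x i = true ∧ wt x = pz + 1) with hB
  set D := Finset.univ.filter (fun x : Fin n → Bool => x i = true ∧ wt x = pz) with hD
  set S := (B ×ˢ D).filter (fun q => s(q.1, q.2) ∈ p.edges) with hS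
  have hvB : v ∈ B := by
    rw [hB, Finset.mem_filter]
    exact ⟨Finset.mem_univ _, hvi, hvw⟩
  have hvjD : vj ∈ D := by
    rw [hD, Finset.mem_filter]
    exact ⟨Finset.mem_univ _, hvji, hvjw⟩
  obtain ⟨j₀, hj₀⟩ : ∃ jx : Fin n, jx ≠ i := ⟨j, hji⟩
  have hBD : B.card = D.card := by
    apply Finset.card_nbij' (i := fun x => flipCoord x j₀) (j := fun x => flipCoord x j₀)
    · intro x hx
      rw [hB, Finset.mem_coe, Finset.mem_filter] at hx
      rw [hD, Finset.mem_coe, Finset.mem_filter]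
      refine ⟨Finset.mem_univ _, ?_, ?_⟩
      · beta_reduce; rw [flip_ne x (Ne.symm hj₀)]; exact hx.2.1
      · rw [wt_flip, hx.2.2, zmod_two_add]
    · intro x hx
      rw [hD, Finset.mem_coe, Finset.mem_filter] at hx
      rw [hB, Finset.mem_coe, Finset.mem_filter]
      refine ⟨Finset.mem_univ _, ?_, ?_⟩
      · beta_reduce; rw [flip_ne x (Ne.symm hj₀)]; exact hx.2.1
      · rw [wt_flip, hx.2.2]
    · intro x _; exact flipC_flip x j₀
    · intro x _; exact flipC_flip x j₀
  have hex : ∀ d ∈ D, ∃ b, (b i = true ∧ wt b = pz + 1) ∧ s(b, d) ∈ p.edges := by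
    intro d hd
    rw [hD, Finset.mem_filter] at hd
    have hdu : d ≠ u := (hbne u d hui hd.2.1).symm
    have hdv : d ≠ v := by
      intro h
      rw [h, hvw] at hd
      exact zmod_two_ne pz hd.2.2.symm
    exact exists_B_edge i pz p hp hd.2.1 hd.2.2 hdu hdv
  -- fiber bound: at most one B-edge per b, including v
  have hfib : ∀ b ∈ B, (S.filter (fun q => q.1 = b)).card ≤ 1 := by
    intro b hb
    rw [hB, Finset.mem_filter] at hb
    obtain ⟨-, hbi, hbw⟩ := hb
    rw [Finset.card_le_one]
    intro q1 hq1 q2 hq2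
    rw [Finset.mem_filter, hS, Finset.mem_filter, Finset.mem_product] at hq1 hq2
    obtain ⟨⟨⟨hq11, hq12⟩, hq13⟩, hq14⟩ := hq1
    obtain ⟨⟨⟨hq21, hq22⟩, hq23⟩, hq24⟩ := hq2
    rw [hD, Finset.mem_filter] at hq12 hq22
    rw [hq14] at hq13
    rw [hq24] at hq23
    have hdd : q1.2 = q2.2 := by
      by_cases hbv : b = v
      · subst hbv
        have h1 := hchar_v _ hq13 (by simp)
        have h2 := hchar_v _ hq23 (by simp)
        rw [Sym2.congr_right.mp h1, Sym2.congr_right.mp h2]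

      · by_contra hdne
        have hHbe := hHb b hbi hbw hbv
        have hbu : b ≠ u := (hbne u b hui hbi).symm
        have hdeg := ham_deg p hp b
        rw [if_neg hbu, if_neg hbv] at hdeg
        norm_num at hdeg
        obtain ⟨e₁, e₂, he12, ⟨hm1, -⟩, ⟨hm2, -⟩, hchar⟩ := countP_two_char hnd hdeg
        have hnebd : ∀ d : Fin n → Bool, d i = true → s(b, d) ≠ s(flipCoord b i, b) := by
          intro d hdi hh
          rw [Sym2.eq_iff] at hh
          rcases hh with ⟨hx, -⟩ | ⟨-, hy⟩
          · have hco := congrFun hx i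
            rw [flip_same, hbi] at hco
            simp at hco
          · have hco := congrFun hy i
            rw [hdi, flip_same, hbi] at hco
            simp at hco
        refine three_pigeon (x := s(b, q1.2)) (y := s(b, q2.2)) (z := s(flipCoord b i, b))
          (a := e₁) (b := e₂) ?_ ?_ ?_ ?_ ?_ ?_
        · intro hh
          exact hdne (Sym2.congr_right.mp hh)
        · exact hnebd q1.2 hq12.2.1
        · exact hnebd q2.2 hq22.2.1
        · exact hchar _ hq13 (by simp)
        · exact hchar _ hq23 (by simp)
        · exact hchar _ hHbe (by simp)
    apply Prod.ext
    · rw [hq14, hq24]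
    · exact hdd
  have hSsum : S.card = ∑ b ∈ B, (S.filter (fun q => q.1 = b)).card := by
    apply Finset.card_eq_sum_card_fiberwise
    intro q hq
    rw [hS, Finset.mem_coe, Finset.mem_filter, Finset.mem_product] at hq
    exact hq.1.1
  have hup : S.card ≤ B.card := by
    rw [hSsum]
    calc ∑ b ∈ B, (S.filter (fun q => q.1 = b)).card ≤ ∑ _b ∈ B, 1 :=
          Finset.sum_le_sum hfib
      _ = B.card := by simp
  -- the claim: only v sends an edge to vj among B
  have hclaim : ∀ b0 : Fin n → Bool, b0 i = true → wt b0 = pz + 1 →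
      s(b0, vj) ∈ p.edges → b0 = v := by
    intro b0 hb0i hb0w hb0e
    by_contra hb0v
    set f2 : (Fin n → Bool) → (Fin n → Bool) × (Fin n → Bool) :=
      fun d => if d = vj then (v, d)
        else (if h : ∃ b, (b i = true ∧ wt b = pz + 1) ∧ s(b, d) ∈ p.edges
          then (h.choose, d) else (d, d)) with hf2
    have hsnd : ∀ d, (f2 d).2 = d := by
      intro d
      rw [hf2]
      by_cases h0 : d = vj
      · simp [if_pos h0]
      · simp only [if_neg h0]
        by_cases h : ∃ b, (b i = true ∧ wt b = pz + 1) ∧ s(b, d) ∈ p.edges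
        · simp [dif_pos h]
        · simp [dif_neg h]
    have hmaps : ∀ d ∈ D, f2 d ∈ S := by
      intro d hd
      rw [hf2]
      by_cases h0 : d = vj
      · subst h0
        simp only [if_pos rfl]
        rw [hS, Finset.mem_filter, Finset.mem_product]
        exact ⟨⟨hvB, hd⟩, hj2⟩
      · simp only [if_neg h0]
        have h := hex d hd
        simp only [dif_pos h]
        obtain ⟨hbq, he⟩ := h.choose_spec
        rw [hS, Finset.mem_filter, Finset.mem_product]
        refine ⟨⟨?_, hd⟩, he⟩
        rw [hB, Finset.mem_filter]
        exact ⟨Finset.mem_univ _, hbq⟩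
    have hinj : Set.InjOn f2 ↑D := by
      intro d1 _ d2 _ hfe
      have := congrArg Prod.snd hfe
      rwa [hsnd, hsnd] at this
    have hb0S : (b0, vj) ∈ S := by
      rw [hS, Finset.mem_filter, Finset.mem_product]
      refine ⟨⟨?_, hvjD⟩, hb0e⟩
      rw [hB, Finset.mem_filter]
      exact ⟨Finset.mem_univ _, hb0i, hb0w⟩
    have hb0nimg : (b0, vj) ∉ D.image f2 := by
      rw [Finset.mem_image]
      rintro ⟨d, -, hd⟩
      have hd2 := congrArg Prod.snd hd
      rw [hsnd] at hd2
      subst hd2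
      rw [hf2] at hd
      simp only [if_pos rfl] at hd
      exact hb0v (congrArg Prod.fst hd).symm
    have hins : insert (b0, vj) (D.image f2) ⊆ S := by
      intro q hq
      rw [Finset.mem_insert] at hq
      rcases hq with rfl | hq
      · exact hb0S
      · rw [Finset.mem_image] at hq
        obtain ⟨d, hd, rfl⟩ := hq
        exact hmaps d hd
    have hcount : D.card + 1 ≤ S.card := by
      have h1 := Finset.card_le_card hins
      rw [Finset.card_insert_of_notMem hb0nimg, Finset.card_image_of_injOn hinj] at h1
      omega
    omega
  -- characterize edges at vj
  have hdegvj := ham_deg p hp vj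
  rw [if_neg hvju, if_neg hvjv] at hdegvj
  norm_num at hdegvj
  obtain ⟨e₁, e₂, he12, ⟨hm1, hc1⟩, ⟨hm2, hc2⟩, hcharvj0⟩ := countP_two_char hnd hdegvj
  simp only [decide_eq_true_eq] at hc1 hc2
  obtain ⟨z₁, hez₁, hadj₁⟩ := edge_decomp (p.edges_subset_edgeSet hm1) hc1
  obtain ⟨z₂, hez₂, hadj₂⟩ := edge_decomp (p.edges_subset_edgeSet hm2) hc2
  have hz12 : z₁ ≠ z₂ := by
    intro hzz
    apply he12
    rw [hez₁, hez₂, hzz]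
  have hzcases : ∀ z : Fin n → Bool, (Qc n).Adj vj z → s(vj, z) ∈ p.edges →
      z = uj ∨ z = v := by
    intro z hadj hze
    obtain ⟨jz, hjz⟩ := qc_adj.mp hadj
    rcases eq_or_ne jz i with rfl | hjzi
    · left
      rw [hjz, key_flip]
    · right
      apply hclaim z
      · rw [hjz, flip_ne vj (Ne.symm hjzi)]; exact hvji
      · rw [hjz, wt_flip, hvjw]
      · rw [Sym2.eq_swap]; exact hze
  have hz1c := hzcases z₁ hadj₁ (hez₁ ▸ hm1)
  have hz2c := hzcases z₂ hadj₂ (hez₂ ▸ hm2)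
  have hujvje : s(vj, uj) ∈ p.edges ∧
      (∀ f ∈ p.edges, vj ∈ f → f = s(vj, v) ∨ f = s(vj, uj)) := by
    rcases hz1c with rfl | rfl <;> rcases hz2c with rfl | rfl
    · exact absurd rfl hz12
    · refine ⟨hez₁ ▸ hm1, ?_⟩
      intro f hf hvjf
      rcases hcharvj0 _ hf (by simp [hvjf]) with rfl | rfl
      · right; exact hez₁
      · left; exact hez₂
    · refine ⟨hez₂ ▸ hm2, ?_⟩
      intro f hf hvjf
      rcases hcharvj0 _ hf (by simp [hvjf]) with rfl | rfl
      · left; exact hez₁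
      · right; exact hez₂
    · exact absurd rfl hz12
  obtain ⟨hvjuje, hchar_vj⟩ := hujvje
  -- characterize edges at uj
  have hdeguj := ham_deg p hp uj
  rw [if_neg huju, if_neg hujv] at hdeguj
  norm_num at hdeguj
  obtain ⟨g₁, g₂, hg12, ⟨hgm1, -⟩, ⟨hgm2, -⟩, hcharuj0⟩ := countP_two_char hnd hdeguj
  have hujvje2 : s(uj, vj) ∈ p.edges := by
    rw [Sym2.eq_swap]
    exact hvjuje
  have hne2 : s(u, uj) ≠ s(uj, vj) := by
    intro hh
    rw [Sym2.eq_iff] at hh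
    rcases hh with ⟨h3, -⟩ | ⟨h3, -⟩
    · exact huju h3.symm
    · exact huvj h3
  have hg1 := hcharuj0 _ hj1 (by simp)
  have hg2 := hcharuj0 _ hujvje2 (by simp)
  have hchar_uj : ∀ f ∈ p.edges, uj ∈ f → f = s(u, uj) ∨ f = s(uj, vj) := by
    intro f hf hujf
    have hfg := hcharuj0 _ hf (by simp [hujf])
    rcases hg1 with h3 | h3 <;> rcases hg2 with h4 | h4
    · exact absurd (h3.trans h4.symm) hne2
    · rcases hfg with rfl | rfl
      · left; exact h3.symm
      · right; exact h4.symm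
    · rcases hfg with rfl | rfl
      · right; exact h4.symm
      · left; exact h3.symm
    · exact absurd (h3.trans h4.symm) hne2
  -- finish with forced4
  refine forced4 hn _ hp huv hujv hvjv hchar_u hchar_uj ?_ ?_
  · intro f hf hvjf
    rcases hchar_vj f hf hvjf with h3 | h3
    · right; exact h3
    · left
      rw [h3]
      exact Sym2.eq_swap
  · intro f hf hvf
    rw [hchar_v f hf hvf]
    exact Sym2.eq_swap

end cores


/-- For `n ≥ 5`, a matching `M` of `Q_n` and vertices `u, v` of opposite parity,
if one of the C-conditions holds then no Hamilton path between `u` and `v` extends `M`. -/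
theorem stmt4 (n : ℕ) (hn : 5 ≤ n) (M : Set (Sym2 (Fin n → Bool)))
    (hM : IsMatchingOn (Qc n) M) (u v : Fin n → Bool) (hpar : wt u ≠ wt v)
    (hc : CondC1 M u v ∨ CondC2 M u v ∨ CondC3 M u v) :
    ¬ ExtendsHamPath (Qc n) M u v := by
  rintro ⟨p, hp, hMp⟩
  have hrev := ham_reverse p hp
  have hrevmem : ∀ e ∈ p.edges, e ∈ p.reverse.edges := by
    intro e he
    rw [SimpleGraph.Walk.edges_reverse, List.mem_reverse]
    exact he
  rcases hc with h1 | h2 | h3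
  · -- C1
    obtain ⟨i, pz, hsub, ⟨e, heH, hue⟩, ⟨e', he'H, hve⟩⟩ := h1
    obtain ⟨w, hwi, hww, rfl⟩ := heH
    obtain ⟨w', hwi', hww', rfl⟩ := he'H
    have hH : ∀ e ∈ halfLayer n i pz, e ∈ p.edges := fun e he => hMp e (hsub he)
    have hHrev : ∀ e ∈ halfLayer n i pz, e ∈ p.reverse.edges :=
      fun e he => hrevmem e (hH e he)
    rw [Sym2.mem_iff] at hue hve
    rcases hue with hue | hue <;> rcases hve with hve | hve
    · exact hpar (by rw [hue, hww, hve, hww'])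
    · exact core1 hn i pz p hp hH (by rw [hue]; exact hwi) (by rw [hue]; exact hww)
        (by rw [hve, flip_same, hwi']; rfl) (by rw [hve, wt_flip, hww'])
    · exact core1 hn i pz p.reverse hrev hHrev (by rw [hve]; exact hwi')
        (by rw [hve]; exact hww') (by rw [hue, flip_same, hwi]; rfl)
        (by rw [hue, wt_flip, hww])
    · refine hpar ?_
      rw [hue, hve, wt_flip, wt_flip, hww, hww']
  · -- C2
    obtain ⟨i, hvu, ⟨pz, e₀, he₀H, hue₀, hsub⟩, j, hji, hjm1, hjm2⟩ := h2
    obtain ⟨w, hwi, hww, rfl⟩ := he₀H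
    have hH_M : ∀ e ∈ halfLayer n i pz, e ≠ s(w, flipCoord w i) → e ∈ p.edges := by
      intro e he hne
      exact hMp e (hsub ⟨he, fun hmem => hne hmem⟩)
    have hjp1 := hMp _ hjm1
    have hjp2 := hMp _ hjm2
    rw [Sym2.mem_iff] at hue₀
    rcases hue₀ with rfl | hft
    · refine core2 hn i j pz hji p hp hwi hww hvu ?_ hjp1 hjp2
      intro e he hne
      apply hH_M e he
      rwa [hvu] at hne
    · have hvw2 : v = w := by rw [hvu, hft, flipC_flip]
      subst hvw2
      refine core2 hn i j pz hji p.reverse hrev hwi hww hft ?_ (hrevmem _ hjp2)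
        (hrevmem _ hjp1)
      intro e he hne
      apply hrevmem
      apply hH_M e he
      intro hh
      apply hne
      rw [hh, ← hft]
  · -- C3
    have hpe := hMp _ h3
    have huv : u ≠ v := fun h => hpar (h ▸ rfl)
    have hnd := hp.isPath.edges_nodup
    have hdegu := ham_deg p hp u
    rw [if_pos rfl, if_neg huv] at hdegu
    norm_num at hdegu
    obtain ⟨eu, heu, hueu, hcharu0⟩ := countP_one_char hdegu
    have heq : s(u, v) = eu := hcharu0 _ hpe (by simp)
    have hchar_u : ∀ f ∈ p.edges, u ∈ f → f = s(u, v) := by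
      intro f hf huf
      rw [heq]
      exact hcharu0 _ hf (by simp [huf])
    have hdegv := ham_deg p hp v
    rw [if_neg (Ne.symm huv), if_pos rfl] at hdegv
    norm_num at hdegv
    obtain ⟨ev, hev, hvev, hcharv0⟩ := countP_one_char hdegv
    have heq2 : s(u, v) = ev := hcharv0 _ hpe (by simp)
    have hchar_v : ∀ f ∈ p.edges, v ∈ f → f = s(u, v) := by
      intro f hf hvf
      rw [heq2]
      exact hcharv0 _ hf (by simp [hvf])
    exact forced2 hn p hp huv hchar_u hchar_v
end

section
/- Let n ≥ 2. If Conjecture A holds for dimension n, then every matching of the hypercube Q_n can be extended to a Hamilton cycle of Q_n. -/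
open SimpleGraph

lemma wt_ne_of_adj {n : ℕ} {u v : Fin n → Bool} (h : (Qc n).Adj u v) : wt u ≠ wt v := by
  have hcard : (Finset.univ.filter fun i => u i ≠ v i).card = 1 := h
  have key : wt u + wt v = 1 := by
    unfold wt
    rw [Finset.card_filter, Finset.card_filter]
    push_cast
    rw [← Finset.sum_add_distrib]
    have h2 : ∀ i ∈ Finset.univ,
        ((if u i = true then (1:ZMod 2) else 0) + (if v i = true then 1 else 0))
          = if u i ≠ v i then 1 else 0 := by
      intro i _
      cases hu : u i <;> cases hv : v i <;> simp [hu, hv] <;> decide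
    rw [Finset.sum_congr rfl h2]
    have h3 : (∑ i : Fin n, if u i ≠ v i then (1:ZMod 2) else 0)
        = (((Finset.univ.filter fun i => u i ≠ v i).card : ℕ) : ZMod 2) := by
      rw [Finset.card_filter]; push_cast; rfl
    rw [h3, hcard]
    norm_num
  intro heq
  rw [heq, CharTwo.add_self_eq_zero] at key
  exact one_ne_zero key.symm

lemma not_mem_edges_of_isPath {V : Type*} {G : SimpleGraph V} {u v : V}
    (p : G.Walk u v) (hp : p.IsPath) (hl : 1 < p.length) : s(u, v) ∉ p.edges := by
  cases p with
  | nil => simp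
  | @cons _ w _ h q =>
    intro hmem
    rw [SimpleGraph.Walk.edges_cons, List.mem_cons] at hmem
    rcases hmem with he | hq
    · rw [Sym2.eq_iff] at he
      rcases he with ⟨-, rfl⟩ | ⟨rfl, rfl⟩
      · have hq' : q.IsPath := hp.of_cons
        rw [SimpleGraph.Walk.isPath_iff_eq_nil] at hq'
        subst hq'
        simp at hl
      · exact G.loopless.irrefl _ h
    · have hu : u ∈ q.support := q.fst_mem_support_of_mem_edges hq
      have := hp.support_nodup
      rw [SimpleGraph.Walk.support_cons, List.nodup_cons] at this
      exact this.1 hu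

lemma key_step {n : ℕ} (hn : 2 ≤ n) (hA : ConjA n)
    (M M' : Set (Sym2 (Fin n → Bool))) (hM' : IsMatchingOn (Qc n) M')
    (u v : Fin n → Bool) (hadj : (Qc n).Adj u v)
    (hcov : ¬ coveredBy M' u) (hsub : M ⊆ M' ∪ {s(u, v)})
    (hsub2 : M' ⊆ M) : ExtendsHamCycle (Qc n) M := by
  obtain ⟨p, hp, hpe⟩ := hA M' hM' u v (wt_ne_of_adj hadj) hcov
  have hlen : 1 < p.length := by
    have hcard : Fintype.card (Fin n → Bool) = 2 ^ n := by
      simp [Fintype.card_fun]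
    have h4 : 4 ≤ 2 ^ n := by
      calc (4:ℕ) = 2 ^ 2 := rfl
      _ ≤ 2 ^ n := Nat.pow_le_pow_right (by norm_num) hn
    have := hp.length_eq
    rw [hcard] at this
    omega
  refine ⟨v, SimpleGraph.Walk.cons hadj.symm p, ?_, ?_⟩
  · rw [SimpleGraph.Walk.isHamiltonianCycle_isCycle_and_isHamiltonian_tail]
    constructor
    · rw [SimpleGraph.Walk.cons_isCycle_iff]
      refine ⟨hp.isPath, ?_⟩
      rw [Sym2.eq_swap]
      exact not_mem_edges_of_isPath p hp.isPath hlen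
    · rw [SimpleGraph.Walk.tail_cons]
      intro a
      simpa using hp a
  · intro e he
    rw [SimpleGraph.Walk.edges_cons, List.mem_cons]
    rcases hsub he with he' | he'
    · exact Or.inr (hpe e he')
    · left
      rw [Set.mem_singleton_iff] at he'
      rw [he', Sym2.eq_swap]

/-- For `n ≥ 2`, if Conjecture A holds for dimension `n` then every matching of `Q_n`
extends to a Hamilton cycle of `Q_n`. -/
theorem stmt13 (n : ℕ) (hn : 2 ≤ n) (hA : ConjA n) :
    ∀ M : Set (Sym2 (Fin n → Bool)), IsMatchingOn (Qc n) M →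
      ExtendsHamCycle (Qc n) M := by
  intro M hM
  by_cases hne : M.Nonempty
  · obtain ⟨e, he⟩ := hne
    induction e using Sym2.ind with
    | _ u v =>
      have hadj : (Qc n).Adj u v := hM.1 he
      refine key_step hn hA M (M \ {s(u,v)}) ?_ u v hadj ?_ ?_ Set.diff_subset
      · exact ⟨fun f hf => hM.1 hf.1,
          fun a ha b hb hab => hM.2 a ha.1 b hb.1 hab⟩
      · rintro ⟨f, hf, huf⟩
        exact hM.2 s(u,v) he f hf.1 (fun h => hf.2 h.symm) u (Sym2.mem_mk_left u v) huf
      · intro f hf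
        by_cases hfe : f = s(u,v)
        · exact Or.inr hfe
        · exact Or.inl ⟨hf, hfe⟩
  · rw [Set.not_nonempty_iff_eq_empty] at hne
    subst hne
    have h0 : (0 : ℕ) < n := by omega
    set i0 : Fin n := ⟨0, h0⟩
    set u : Fin n → Bool := fun _ => false with hu
    set v : Fin n → Bool := flipCoord u i0 with hv
    have hadj : (Qc n).Adj u v := by
      show (Finset.univ.filter fun i => u i ≠ v i).card = 1
      have : (Finset.univ.filter fun i => u i ≠ v i) = {i0} := by
        ext j
        simp only [Finset.mem_filter, Finset.mem_univ, true_and, Finset.mem_singleton]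
        constructor
        · intro hj
          by_contra hji
          exact hj (by simp [hv, flipCoord, Function.update_of_ne hji])
        · rintro rfl
          simp [hu, hv, flipCoord]
      rw [this, Finset.card_singleton]
    refine key_step hn hA ∅ ∅ ?_ u v hadj ?_ ?_ (by simp)
    · exact ⟨by simp, by simp⟩
    · rintro ⟨f, hf, -⟩; exact hf
    · simp
end
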